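/- For the predator-prey system S' = λ(t) - μS - f̄(S,P)P, P' = γ f̄(S,P)P - δ₁P - δ₂P², with f̄ nondecreasing in S, nonincreasing in P, λ(t) ∈ [Λℓ, Λu] ⊂ (0,∞), and nonnegative solutions: if γ f̄(Θ̂^u/γ, 0) < δ₁, where Θ̂^u = γΛu/min{μ, δ₁}, then P(t) → 0 as t → ∞ for every nonnegative initial condition. -/

import Mathlib

open Real Filter

/-- Exponential decay comparison: if `f' ≤ -c f` on `[T, ∞)` then
`f t ≤ f T * exp (-c (t - T))` there. -/
lemma expDecay (f f' : ℝ → ℝ) (c T : ℝ)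
    (hd : ∀ t, T ≤ t → HasDerivAt f (f' t) t)
    (hle : ∀ t, T ≤ t → f' t ≤ -c * f t) :
    ∀ t, T ≤ t → f t ≤ f T * Real.exp (-c * (t - T)) := by
  set g : ℝ → ℝ := fun t => f t * Real.exp (c * (t - T)) with hgdef
  have hg : ∀ t, T ≤ t → HasDerivAt g
      (f' t * Real.exp (c * (t - T)) + f t * (Real.exp (c * (t - T)) * (c * 1))) t := by
    intro t ht
    exact (hd t ht).mul (((hasDerivAt_id t).sub_const T).const_mul c).exp
  have hanti : AntitoneOn g (Set.Ici T) := by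
    apply antitoneOn_of_deriv_nonpos (convex_Ici T)
    · exact fun x hx => ((hg x hx).continuousAt).continuousWithinAt
    · intro x hx
      rw [interior_Ici] at hx
      exact (hg x (le_of_lt hx)).differentiableAt.differentiableWithinAt
    · intro x hx
      rw [interior_Ici] at hx
      rw [(hg x (le_of_lt hx)).deriv]
      have h1 := hle x (le_of_lt hx)
      have h2 := Real.exp_pos (c * (x - T))
      nlinarith
  intro t ht
  have h1 : g t ≤ g T := hanti Set.self_mem_Ici ht ht
  have h2 : g T = f T := by simp [hgdef]
  have h3 : g t * Real.exp (-c * (t - T)) ≤ f T * Real.exp (-c * (t - T)) := by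
    rw [← h2]
    exact mul_le_mul_of_nonneg_right h1 (Real.exp_pos _).le
  have h4 : g t * Real.exp (-c * (t - T)) = f t := by
    rw [hgdef]
    simp only
    rw [mul_assoc, ← Real.exp_add]
    ring_nf
    simp
  rwa [h4] at h3

theorem stmt18 (μ γ δ₁ δ₂ Λℓ Λu : ℝ) (l : ℝ → ℝ) (fb : ℝ → ℝ → ℝ) (S P : ℝ → ℝ)
    (hμ : 0 < μ) (hγ : 0 < γ) (hδ₁ : 0 < δ₁) (hδ₂ : 0 < δ₂)
    (hΛℓ : 0 < Λℓ) (hΛ : Λℓ ≤ Λu)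
    (hl : Continuous l) (hlb : ∀ t, Λℓ ≤ l t ∧ l t ≤ Λu)
    (hfb_cont : Continuous (fun p : ℝ × ℝ => fb p.1 p.2))
    (hfb_nonneg : ∀ x z, 0 ≤ x → 0 ≤ z → 0 ≤ fb x z)
    (hfbS : ∀ z, MonotoneOn (fun x => fb x z) (Set.Ici 0))
    (hfbP : ∀ x, AntitoneOn (fun z => fb x z) (Set.Ici 0))
    (hpos : ∀ t, 0 ≤ t → 0 ≤ S t ∧ 0 ≤ P t)
    (hS : ∀ t, 0 ≤ t → HasDerivAt S (l t - μ * S t - fb (S t) (P t) * P t) t)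
    (hP : ∀ t, 0 ≤ t → HasDerivAt P
      (γ * fb (S t) (P t) * P t - δ₁ * P t - δ₂ * (P t) ^ 2) t)
    (hthr : γ * fb (γ * Λu / min μ δ₁ / γ) 0 < δ₁) :
    Tendsto P atTop (nhds 0) := by
  have hΛu : 0 < Λu := lt_of_lt_of_le hΛℓ hΛ
  set m := min μ δ₁ with hm
  have hm0 : 0 < m := lt_min hμ hδ₁
  have hMeq : γ * Λu / m / γ = Λu / m := by
    field_simp
  set M := Λu / m with hMdef
  have hM0 : 0 ≤ M := le_of_lt (div_pos hΛu hm0)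
  have hthr' : γ * fb M 0 < δ₁ := by rwa [hMeq] at hthr
  -- continuity of x ↦ γ * fb x 0
  have hφ : Continuous (fun x : ℝ => γ * fb x 0) :=
    continuous_const.mul (hfb_cont.comp (continuous_id.prodMk continuous_const))
  set ε := (δ₁ - γ * fb M 0) / 2 with hεdef
  have hε : 0 < ε := by
    rw [hεdef]; linarith
  have hev : ∀ᶠ x in nhds M, γ * fb x 0 < δ₁ - ε := by
    have : γ * fb M 0 < δ₁ - ε := by rw [hεdef]; linarith
    exact (hφ.tendsto M).eventually (Filter.Tendsto.eventually_lt_const this tendsto_id)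
  obtain ⟨δ, hδ0, hδ⟩ := Metric.eventually_nhds_iff.mp hev
  set B := M + δ / 2 with hBdef
  have hB0 : 0 ≤ B := by positivity
  have hBlt : γ * fb B 0 < δ₁ - ε := by
    apply hδ
    rw [Real.dist_eq, hBdef]
    rw [show M + δ / 2 - M = δ / 2 by ring, abs_of_pos (by linarith)]
    linarith
  -- eventual bound on S
  have hSdecay : ∀ t, (0:ℝ) ≤ t →
      S t - Λu / μ ≤ (S 0 - Λu / μ) * Real.exp (-μ * (t - 0)) := by
    have := expDecay (fun t => S t - Λu / μ)
      (fun t => l t - μ * S t - fb (S t) (P t) * P t) μ 0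
      (fun t ht => (hS t ht).sub_const _)
      (fun t ht => by
        have h1 := (hlb t).2
        have h2 : 0 ≤ fb (S t) (P t) * P t :=
          mul_nonneg (hfb_nonneg _ _ (hpos t ht).1 (hpos t ht).2) (hpos t ht).2
        have hcancel : μ * (Λu / μ) = Λu := mul_div_cancel₀ Λu hμ.ne'
        nlinarith [hcancel])
    exact this
  have hSlim : Tendsto (fun t => Λu / μ + (S 0 - Λu / μ) * Real.exp (-μ * (t - 0)))
      atTop (nhds (Λu / μ)) := by
    have h1 : Tendsto (fun t : ℝ => -μ * (t - 0)) atTop atBot := by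
      apply Tendsto.const_mul_atTop_of_neg (neg_neg_iff_pos.mpr hμ) <;> try exact ?_
      exact tendsto_atTop_add_const_right _ _ tendsto_id
    have h2 : Tendsto (fun t : ℝ => (S 0 - Λu / μ) * Real.exp (-μ * (t - 0)))
        atTop (nhds 0) := by
      have := (Real.tendsto_exp_atBot.comp h1).const_mul (S 0 - Λu / μ)
      simpa using this
    simpa using (tendsto_const_nhds.add h2)
  have hΛμM : Λu / μ < B := by
    have : Λu / μ ≤ M := by
      rw [hMdef]
      exact div_le_div_of_nonneg_left hΛu.le hm0 (min_le_left _ _)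
    rw [hBdef]; linarith
  have hevS : ∀ᶠ t in atTop, S t ≤ B := by
    filter_upwards [hSlim.eventually_lt_const hΛμM,
      eventually_ge_atTop (0:ℝ)] with t h1 h2
    have h3 : S t ≤ Λu / μ + (S 0 - Λu / μ) * rexp (-μ * (t - 0)) := by
      linarith [hSdecay t h2]
    exact le_of_lt (lt_of_le_of_lt h3 h1)
  obtain ⟨T₀, hT₀⟩ := eventually_atTop.mp hevS
  set T := max T₀ 0 with hTdef
  have hT0 : (0:ℝ) ≤ T := le_max_right _ _
  -- P decay
  have hPdecay : ∀ t, T ≤ t → P t ≤ P T * Real.exp (-ε * (t - T)) := by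
    apply expDecay P (fun t => γ * fb (S t) (P t) * P t - δ₁ * P t - δ₂ * (P t) ^ 2) ε T
    · exact fun t ht => hP t (le_trans hT0 ht)
    · intro t ht
      have ht0 : (0:ℝ) ≤ t := le_trans hT0 ht
      have hSt : 0 ≤ S t := (hpos t ht0).1
      have hPt : 0 ≤ P t := (hpos t ht0).2
      have hSB : S t ≤ B := hT₀ t (le_trans (le_max_left _ _) ht)
      have h1 : fb (S t) (P t) ≤ fb (S t) 0 :=
        hfbP (S t) Set.self_mem_Ici hPt hPt
      have h2 : fb (S t) 0 ≤ fb B 0 :=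
        hfbS 0 hSt hB0 hSB
      have h3 : γ * fb (S t) (P t) ≤ δ₁ - ε := by nlinarith
      nlinarith
  -- squeeze
  have hupper : Tendsto (fun t => P T * Real.exp (-ε * (t - T))) atTop (nhds 0) := by
    have h1 : Tendsto (fun t : ℝ => -ε * (t - T)) atTop atBot := by
      apply Tendsto.const_mul_atTop_of_neg (neg_neg_iff_pos.mpr hε)
      exact tendsto_atTop_add_const_right _ _ tendsto_id
    have := (Real.tendsto_exp_atBot.comp h1).const_mul (P T)
    simpa using this
  apply tendsto_of_tendsto_of_tendsto_of_le_of_le' tendsto_const_nhds hupper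
  · filter_upwards [eventually_ge_atTop (0:ℝ)] with t ht
    exact (hpos t ht).2
  · filter_upwards [eventually_ge_atTop T] with t ht
    exact hPdecay t ht
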